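/- arXiv:1210.7363 — 2 statements merged into one kernel-verified Lean document; each statement's English description precedes it below -/
import Mathlib

section
/- Let α ≤ 1/2 and let v : ℝ → ℝ be a C² convex solution of the one-dimensional translator equation (1 + v'²)^{1/(2α) - 1/2} · v''/(1 + v'²) = 1, i.e. v'' = (1 + v'²)^{3/2 - 1/(2α)}, defined on all of ℝ. Then u(x, y) := v(x) - y, as a function on ℝ², satisfies (|Du|²)^{1/(2α)-1/2} Σ_{i,j}(δ_{ij} - u_iu_j/|Du|²) u_{ij} = 1 and is convex but not rotationally symmetric (its level sets are translates of the graph of v, not circles). -/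
open Real

/-- The operator `L_σ(v) = (σ + |Dv|²)^{1/(2α)-1/2} Σ (δ_{ij} - v_i v_j/(σ+|Dv|²)) v_{ij}`
in dimension n. -/
noncomputable def Lsigma (n : ℕ) (σ α : ℝ) (v : EuclideanSpace ℝ (Fin n) → ℝ)
    (x : EuclideanSpace ℝ (Fin n)) : ℝ :=
  (σ + ‖gradient v x‖^2) ^ (1/(2*α) - 1/2) *
    ∑ i : Fin n, ∑ j : Fin n,
      ((if i = j then (1:ℝ) else 0) - gradient v x i * gradient v x j / (σ + ‖gradient v x‖^2)) *
        iteratedFDeriv ℝ 2 v x ![EuclideanSpace.single i 1, EuclideanSpace.single j 1]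

/-- For α ≤ 1/2, from an entire one-dimensional translator v one builds
u(x,y) = v(x) - y, an entire convex non-rotationally-symmetric solution of L₀ u = 1. -/
theorem stmt_18 (α : ℝ) (hα₀ : 0 < α) (hα : α ≤ 1/2)
    (v : ℝ → ℝ) (hv : ContDiff ℝ 2 v) (hconv : ConvexOn ℝ Set.univ v)
    (hODE : ∀ x : ℝ, deriv (deriv v) x = (1 + (deriv v x)^2) ^ ((3:ℝ)/2 - 1/(2*α)))
    (u : EuclideanSpace ℝ (Fin 2) → ℝ)
    (hu : ∀ p : EuclideanSpace ℝ (Fin 2), u p = v (p 0) - p 1) :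
    (∀ z : EuclideanSpace ℝ (Fin 2), Lsigma 2 0 α u z = 1) ∧
    ConvexOn ℝ Set.univ u ∧
    ¬ ∃ c : EuclideanSpace ℝ (Fin 2), ∀ p q : EuclideanSpace ℝ (Fin 2),
        ‖p - c‖ = ‖q - c‖ → u p = u q := by
  have hu' : u = fun p => v (p 0) - p 1 := funext hu
  subst hu'
  have hv' : Differentiable ℝ v := hv.differentiable (by norm_num)
  have hv'' : Differentiable ℝ (deriv v) := by
    have h := (contDiff_succ_iff_deriv (n := 1)).mp (by exact_mod_cast hv)
    exact h.2.2.differentiable (by norm_num)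
  set u : EuclideanSpace ℝ (Fin 2) → ℝ := fun p => v (p 0) - p 1 with hudef
  set P0 : EuclideanSpace ℝ (Fin 2) →L[ℝ] ℝ := EuclideanSpace.proj 0 with hP0
  set P1 : EuclideanSpace ℝ (Fin 2) →L[ℝ] ℝ := EuclideanSpace.proj 1 with hP1
  -- first derivative
  have hFD : ∀ x, HasFDerivAt u (deriv v (x 0) • P0 - P1) x := by
    intro x
    have h1 : HasFDerivAt (fun p : EuclideanSpace ℝ (Fin 2) => v (p 0))
        (deriv v (x 0) • P0) x :=
      (hv' (x 0)).hasDerivAt.comp_hasFDerivAt x P0.hasFDerivAt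
    exact h1.sub P1.hasFDerivAt
  have hfderiv : ∀ x, fderiv ℝ u x = deriv v (x 0) • P0 - P1 := fun x => (hFD x).fderiv
  -- gradient coordinates
  have hgrad : ∀ (x : EuclideanSpace ℝ (Fin 2)) (i : Fin 2),
      gradient u x i = fderiv ℝ u x (EuclideanSpace.single i 1) := by
    intro x i
    have h1 : gradient u x i
        = @inner ℝ _ _ (EuclideanSpace.single i (1:ℝ)) (gradient u x) := by
      rw [EuclideanSpace.inner_single_left]; simp
    rw [h1, real_inner_comm]
    exact InnerProductSpace.toDual_symm_apply
  have g0 : ∀ x, gradient u x 0 = deriv v (x 0) := by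
    intro x
    rw [hgrad x 0, hfderiv]
    simp [hP0, hP1, EuclideanSpace.single_apply]
  have g1 : ∀ x, gradient u x 1 = -1 := by
    intro x
    rw [hgrad x 1, hfderiv]
    simp [hP0, hP1, EuclideanSpace.single_apply]
  have hns : ∀ x, ‖gradient u x‖^2 = 1 + (deriv v (x 0))^2 := by
    intro x
    rw [← real_inner_self_eq_norm_sq, PiLp.inner_apply, Fin.sum_univ_two, g0, g1]
    simp; ring
  -- second derivative
  have hFD2 : ∀ x, HasFDerivAt (fun y => fderiv ℝ u y)
      ((deriv (deriv v) (x 0) • P0).smulRight P0) x := by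
    intro x
    have hc : HasFDerivAt (fun y : EuclideanSpace ℝ (Fin 2) => deriv v (y 0))
        (deriv (deriv v) (x 0) • P0) x := by
      have := (hv'' (P0 x)).hasDerivAt.comp_hasFDerivAt x P0.hasFDerivAt
      exact this
    have h2 : HasFDerivAt (fun y : EuclideanSpace ℝ (Fin 2) => deriv v (y 0) • P0 - P1)
        ((deriv (deriv v) (x 0) • P0).smulRight P0) x := (hc.smul_const P0).sub_const P1
    refine h2.congr_of_eventuallyEq ?_
    filter_upwards with y using (hfderiv y)
  have hsec : ∀ (x : EuclideanSpace ℝ (Fin 2)) (i j : Fin 2),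
      iteratedFDeriv ℝ 2 u x ![EuclideanSpace.single i 1, EuclideanSpace.single j 1]
        = deriv (deriv v) (x 0) * (if i = 0 then 1 else 0) * (if j = 0 then 1 else 0) := by
    intro x i j
    rw [iteratedFDeriv_two_apply, (hFD2 x).fderiv]
    fin_cases i <;> fin_cases j <;>
      simp [hP0, EuclideanSpace.single_apply]
  refine ⟨?_, ?_, ?_⟩
  · intro z
    have ha := hns z
    have ht : (0:ℝ) < 1 + (deriv v (z 0))^2 := by positivity
    unfold Lsigma
    rw [Fin.sum_univ_two, Fin.sum_univ_two, Fin.sum_univ_two]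
    simp only [hsec, g0, g1, ha, hODE]
    norm_num
    set a := deriv v (z 0) with hadef
    rw [show (1:ℝ) - a * a / (1 + a^2) = 1/(1+a^2) by field_simp; ring]
    rw [div_mul_eq_mul_div, mul_div_assoc', one_mul, ← Real.rpow_add ht,
      show α⁻¹ * (1/2) - 1/2 + ((3:ℝ)/2 - α⁻¹ * (1/2)) = 1 by ring, Real.rpow_one]
    field_simp
  · refine ⟨convex_univ, ?_⟩
    intro p _ q _ a b ha hb hab
    have hp0 : (a • p + b • q) 0 = a * p 0 + b * q 0 := rfl
    have hp1 : (a • p + b • q) 1 = a * p 1 + b * q 1 := rfl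
    simp only [hudef, hp0, hp1, smul_eq_mul]
    have := hconv.2 (Set.mem_univ (p 0)) (Set.mem_univ (q 0)) ha hb hab
    simp only [smul_eq_mul] at this
    linarith
  · rintro ⟨c, hc⟩
    set e : EuclideanSpace ℝ (Fin 2) := EuclideanSpace.single (1 : Fin 2) (1:ℝ) with he
    have hnorm : ‖(c + e) - c‖ = ‖(c - e) - c‖ := by
      rw [add_sub_cancel_left, sub_sub_cancel_left, norm_neg]
    have h := hc _ _ hnorm
    simp only [hudef] at h
    have e0 : e 0 = 0 := by simp [he, EuclideanSpace.single_apply]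
    have e1 : e 1 = 1 := by simp [he, EuclideanSpace.single_apply]
    rw [show (c+e) 0 = c 0 + e 0 from rfl, show (c+e) 1 = c 1 + e 1 from rfl,
        show (c-e) 0 = c 0 - e 0 from rfl, show (c-e) 1 = c 1 - e 1 from rfl, e0, e1] at h
    simp at h
    linarith
end

section
/- Let α > 0, and for the ODE v'' = (1 + v'²)^{3/2 - 1/(2α)} with v(0) = v'(0) = 0: the maximal interval of existence of v is all of ℝ if and only if ∫₀^∞ (1 + w²)^{1/(2α) - 3/2} dw = ∞, which holds if and only if α ≤ 1/2. -/
open Real MeasureTheory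

theorem aux_not_int (p : ℝ) (hp : -(1/2) ≤ p) :
    ¬ IntegrableOn (fun w : ℝ => (1 + w^2) ^ p) (Set.Ioi 0) := by
  intro h
  have h1 : IntegrableOn (fun w : ℝ => (1 + w^2) ^ p) (Set.Ioi 1) :=
    h.mono_set (Set.Ioi_subset_Ioi zero_le_one)
  have h2 : IntegrableOn (fun w : ℝ => w⁻¹) (Set.Ioi 1) := by
    refine ((h1.const_mul (Real.sqrt 2)).mono
      measurable_inv.aestronglyMeasurable ?_)
    filter_upwards [ae_restrict_mem measurableSet_Ioi] with w hw
    have hw1 : (1:ℝ) ≤ w := le_of_lt hw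
    have hw0 : (0:ℝ) < w := lt_of_lt_of_le one_pos hw1
    have hb : (1:ℝ) ≤ 1 + w^2 := by nlinarith
    have e1 : (1 + w^2 : ℝ) ^ (-(1/2):ℝ) ≤ (1 + w^2) ^ p :=
      rpow_le_rpow_of_exponent_le hb hp
    have e2 : (2 * w^2 : ℝ) ^ (-(1/2):ℝ) ≤ (1 + w^2) ^ (-(1/2):ℝ) := by
      apply rpow_le_rpow_of_nonpos (by positivity) (by nlinarith) (by norm_num)
    have e3 : (2 * w^2 : ℝ) ^ (-(1/2):ℝ) = (Real.sqrt 2)⁻¹ * w⁻¹ := by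
      rw [Real.mul_rpow (by norm_num) (by positivity), rpow_neg (by norm_num),
        rpow_neg (by positivity)]
      congr 1
      · rw [Real.sqrt_eq_rpow]
      · rw [← Real.rpow_natCast w 2, ← Real.rpow_mul hw0.le]; norm_num
    have key : w⁻¹ ≤ Real.sqrt 2 * (1 + w^2) ^ p := by
      have s2 : (0:ℝ) < Real.sqrt 2 := by positivity
      have : (Real.sqrt 2)⁻¹ * w⁻¹ ≤ (1 + w^2) ^ p := le_trans (e3 ▸ e2) e1
      calc w⁻¹ = Real.sqrt 2 * ((Real.sqrt 2)⁻¹ * w⁻¹) := by field_simp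
        _ ≤ Real.sqrt 2 * (1 + w^2) ^ p := by
            exact mul_le_mul_of_nonneg_left this s2.le
    rw [Real.norm_eq_abs, Real.norm_eq_abs, abs_of_nonneg (by positivity),
      abs_of_nonneg (by positivity)]
    exact key
  have := (integrableOn_Ioi_rpow_iff (s := (-1:ℝ)) (t := (1:ℝ)) one_pos).mp ?_
  · norm_num at this
  · refine h2.congr_fun (fun x hx => ?_) measurableSet_Ioi
    rw [rpow_neg_one]

theorem aux_int (p : ℝ) (hp : p < -(1/2)) :
    IntegrableOn (fun w : ℝ => (1 + w^2) ^ p) (Set.Ioi 0) := by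
  have hcont : Continuous (fun w : ℝ => (1 + w^2) ^ p) := by
    apply Continuous.rpow_const (by continuity)
    intro x; left; positivity
  rw [← Set.Ioc_union_Ioi_eq_Ioi (zero_le_one), integrableOn_union]
  constructor
  · exact hcont.continuousOn.integrableOn_Icc.mono_set Set.Ioc_subset_Icc_self
  · have hint : IntegrableOn (fun x : ℝ => x ^ (2*p)) (Set.Ioi 1) :=
      (integrableOn_Ioi_rpow_iff one_pos).mpr (by linarith)
    refine Integrable.mono hint hcont.aestronglyMeasurable.restrict ?_
    filter_upwards [ae_restrict_mem measurableSet_Ioi] with w hw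
    have hw1 : (1:ℝ) ≤ w := le_of_lt hw
    have hw0 : (0:ℝ) < w := lt_of_lt_of_le one_pos hw1
    have e1 : (1 + w^2 : ℝ) ^ p ≤ (w^2 : ℝ) ^ p :=
      rpow_le_rpow_of_nonpos (by positivity) (by nlinarith) (by linarith)
    have e2 : (w^2 : ℝ) ^ p = w ^ (2*p) := by
      rw [← Real.rpow_natCast w 2, ← Real.rpow_mul hw0.le]; norm_num
    rw [Real.norm_eq_abs, Real.norm_eq_abs, abs_of_nonneg (by positivity),
      abs_of_nonneg (by positivity)]
    exact e2 ▸ e1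

theorem aux_forward (p : ℝ) (w : ℝ → ℝ) (hw0 : w 0 = 0)
    (hw : ∀ x, HasDerivAt w ((1 + (w x)^2) ^ (-p)) x) :
    ¬ IntegrableOn (fun t : ℝ => (1 + t^2) ^ p) (Set.Ioi 0) := by
  intro hint
  set f : ℝ → ℝ := fun t => (1 + t^2) ^ p with hf
  have hf_cont : Continuous f := by
    apply Continuous.rpow_const (by continuity)
    intro x; left; positivity
  have hf_pos : ∀ t, 0 < f t := fun t => rpow_pos_of_pos (by positivity) p
  set F : ℝ → ℝ := fun u => ∫ t in (0:ℝ)..u, f t with hF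
  have hF' : ∀ u, HasDerivAt F (f u) u := fun u =>
    (hf_cont.integral_hasStrictDerivAt 0 u).hasDerivAt
  -- H x = F (w x) - x is constant 0
  have hH : ∀ x, HasDerivAt (fun x => F (w x) - x) 0 x := by
    intro x
    have h1 : HasDerivAt (fun x => F (w x)) (f (w x) * (1 + (w x)^2) ^ (-p)) x :=
      (hF' (w x)).comp x (hw x)
    have h2 : f (w x) * (1 + (w x)^2) ^ (-p) = 1 := by
      rw [hf, ← Real.rpow_add (by positivity)]; simp
    rw [h2] at h1
    simpa [Pi.sub_def] using h1.sub (hasDerivAt_id x)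
  have hconst : ∀ x, F (w x) - x = F (w 0) - 0 := by
    intro x
    have hdiff : Differentiable ℝ (fun x => F (w x) - x) := fun x => (hH x).differentiableAt
    exact is_const_of_deriv_eq_zero hdiff (fun x => (hH x).deriv) x 0
  have hFw : ∀ x, F (w x) = x := by
    intro x
    have := hconst x
    simp [hw0, hF, intervalIntegral.integral_same] at this
    linarith
  -- F is bounded above by L := ∫ over Ioi 0
  set L : ℝ := ∫ t in Set.Ioi (0:ℝ), f t with hL
  have hLnn : 0 ≤ L := setIntegral_nonneg measurableSet_Ioi (fun t _ => (hf_pos t).le)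
  have hFle : ∀ u, F u ≤ L := by
    intro u
    rcases le_or_gt 0 u with h | h
    · show (∫ t in (0:ℝ)..u, f t) ≤ L
      rw [intervalIntegral.integral_of_le h]
      exact setIntegral_mono_set hint (Filter.Eventually.of_forall fun t => (hf_pos t).le)
        (HasSubset.Subset.eventuallyLE Set.Ioc_subset_Ioi_self)
    · have : F u ≤ 0 := by
        show (∫ t in (0:ℝ)..u, f t) ≤ 0
        rw [intervalIntegral.integral_symm]
        simp only [neg_nonpos]
        rw [intervalIntegral.integral_of_le h.le]
        exact setIntegral_nonneg measurableSet_Ioc (fun t _ => (hf_pos t).le)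
      linarith
  have := hFle (w (L + 1))
  rw [hFw (L+1)] at this
  linarith

theorem aux_backward (p : ℝ)
    (hni : ¬ IntegrableOn (fun t : ℝ => (1 + t^2) ^ p) (Set.Ioi 0)) :
    ∃ v w : ℝ → ℝ, v 0 = 0 ∧ w 0 = 0 ∧
      (∀ x : ℝ, HasDerivAt v (w x) x) ∧
      (∀ x : ℝ, HasDerivAt w ((1 + (w x)^2) ^ (-p)) x) := by
  set f : ℝ → ℝ := fun t => (1 + t^2) ^ p with hf
  have hf_cont : Continuous f := by
    apply Continuous.rpow_const (by continuity)
    intro x; left; positivity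
  have hf_pos : ∀ t, 0 < f t := fun t => rpow_pos_of_pos (by positivity) p
  have hf_even : ∀ t, f (-t) = f t := by intro t; simp [hf]
  set F : ℝ → ℝ := fun u => ∫ t in (0:ℝ)..u, f t with hF
  have hF' : ∀ u, HasDerivAt F (f u) u := fun u =>
    (hf_cont.integral_hasStrictDerivAt 0 u).hasDerivAt
  have hF_cont : Continuous F := by
    have : Differentiable ℝ F := fun u => (hF' u).differentiableAt
    exact this.continuous
  have hmono : StrictMono F :=
    strictMono_of_deriv_pos (fun u => by rw [(hF' u).deriv]; exact hf_pos u)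
  have hF0 : F 0 = 0 := intervalIntegral.integral_same
  -- F unbounded above
  have hnb : ¬ BddAbove (Set.range F) := by
    rintro ⟨M, hM⟩
    apply hni
    apply integrableOn_Ioi_of_intervalIntegral_norm_bounded M 0
      (fun i : ℝ => hf_cont.integrableOn_Ioc) Filter.tendsto_id
    filter_upwards [Filter.eventually_ge_atTop (0:ℝ)] with b hb
    have : (∫ x in (0:ℝ)..(id b), ‖f x‖) = F b := by
      rw [hF]
      exact intervalIntegral.integral_congr (fun x _ => by
        rw [Real.norm_eq_abs, abs_of_pos (hf_pos x)])
    rw [this]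
    exact hM ⟨b, rfl⟩
  have hTop : Filter.Tendsto F Filter.atTop Filter.atTop :=
    Filter.tendsto_atTop_atTop_of_monotone' hmono.monotone hnb
  have hodd : ∀ u, F (-u) = - F u := by
    intro u
    rw [hF]
    show (∫ t in (0:ℝ)..(-u), f t) = -∫ t in (0:ℝ)..u, f t
    rw [intervalIntegral.integral_symm]
    congr 1
    calc (∫ t in (-u)..(0:ℝ), f t) = ∫ t in (-u)..(-(0:ℝ)), f t := by norm_num
      _ = ∫ t in (0:ℝ)..u, f (-t) := (intervalIntegral.integral_comp_neg f).symm
      _ = ∫ t in (0:ℝ)..u, f t := intervalIntegral.integral_congr (fun t _ => hf_even t)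
  have hBot : Filter.Tendsto F Filter.atBot Filter.atBot := by
    have h1 : Filter.Tendsto (fun u => F (-u)) Filter.atTop Filter.atBot := by
      have := Filter.tendsto_neg_atTop_atBot.comp hTop
      simpa [Function.comp_def, hodd] using this
    have := h1.comp (Filter.tendsto_neg_atBot_atTop (G := ℝ))
    simpa [Function.comp_def] using this
  have hsurj : Function.Surjective F := hF_cont.surjective hTop hBot
  set E : ℝ ≃o ℝ := StrictMono.orderIsoOfSurjective F hmono hsurj with hE
  have hEsymm_cont : Continuous (fun x => E.symm x) := E.symm.continuous
  have hFE : ∀ x, F (E.symm x) = x := fun x => E.apply_symm_apply x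
  set w : ℝ → ℝ := fun x => E.symm x with hwdef
  have hw0 : w 0 = 0 := by
    have hE0 : E 0 = 0 := hF0
    show E.symm 0 = 0
    exact E.symm_apply_eq.mpr hE0.symm
  have hw : ∀ x, HasDerivAt w ((1 + (w x)^2) ^ (-p)) x := by
    intro x
    have hd : HasDerivAt w (f (w x))⁻¹ x := by
      apply HasDerivAt.of_local_left_inverse (hEsymm_cont.continuousAt)
        (hF' (w x)) (hf_pos (w x)).ne'
      exact Filter.Eventually.of_forall hFE
    have : (f (w x))⁻¹ = (1 + (w x)^2) ^ (-p) := by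
      rw [hf, ← Real.rpow_neg (by positivity)]
    rwa [this] at hd
  have hw_cont : Continuous w := hEsymm_cont
  refine ⟨fun x => ∫ t in (0:ℝ)..x, w t, w, intervalIntegral.integral_same, hw0, ?_, hw⟩
  exact fun x => (hw_cont.integral_hasStrictDerivAt 0 x).hasDerivAt

/-- The ODE v'' = (1 + v'²)^{3/2 - 1/(2α)}, v(0) = v'(0) = 0, has a global solution on all
of ℝ iff ∫₀^∞ (1+w²)^{1/(2α)-3/2} dw diverges, iff α ≤ 1/2. -/
theorem stmt_19 (α : ℝ) (hα : 0 < α) :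
    ((∃ v w : ℝ → ℝ, v 0 = 0 ∧ w 0 = 0 ∧
        (∀ x : ℝ, HasDerivAt v (w x) x) ∧
        (∀ x : ℝ, HasDerivAt w ((1 + (w x)^2) ^ ((3:ℝ)/2 - 1/(2*α))) x)) ↔
      ¬ IntegrableOn (fun w : ℝ => (1 + w^2) ^ (1/(2*α) - (3:ℝ)/2)) (Set.Ioi 0)) ∧
    (¬ IntegrableOn (fun w : ℝ => (1 + w^2) ^ (1/(2*α) - (3:ℝ)/2)) (Set.Ioi 0) ↔
      α ≤ 1/2) := by
  set p : ℝ := 1/(2*α) - (3:ℝ)/2 with hp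
  constructor
  · constructor
    · rintro ⟨v, w, hv0, hw0, hv, hw⟩
      refine aux_forward p w hw0 (fun x => ?_)
      convert hw x using 2
      rw [hp]; ring
    · intro hni
      obtain ⟨v, w, h1, h2, h3, h4⟩ := aux_backward p hni
      refine ⟨v, w, h1, h2, h3, fun x => ?_⟩
      convert h4 x using 2
      rw [hp]; ring
  · constructor
    · intro hni
      by_contra hle
      push_neg at hle
      refine hni (aux_int p ?_)
      have h1 : 1/(2*α) < 1 := by
        rw [div_lt_one (by linarith)]; linarith
      rw [hp]; linarith
    · intro hle
      refine aux_not_int p ?_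
      have h1 : (1:ℝ) ≤ 1/(2*α) := by
        rw [le_div_iff₀ (by linarith)]; linarith
      rw [hp]; linarith
end
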